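/- Let L = S + A on a Hilbert space H decomposed as H = H₀ ⊕ H₊, where S is self-adjoint nonpositive with S Π₀ = Π₀ S = 0 and −S ≥ s Π₊ for some s > 0, Π₀ A Π₀ = 0, and A_{+0} = Π₊ A Π₀ satisfies ‖A_{+0}φ‖ ≥ a‖φ‖ on H₀ with a > 0. Assume all blocks are bounded and the Schur complement S₀ = A_{+0}* L_{++}⁻¹ A_{+0} is invertible on H₀ with ‖S₀⁻¹‖ ≤ M. Then L is invertible on H with ‖L⁻¹‖ ≤ 2M + 3/s. -/

import Mathlib

open ContinuousLinearMap


section SchurRing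
variable {R : Type*} [Ring R] (P S A Lp T : R)

theorem schur_core
    (hPP : P*P = P) (hSP : S*P = 0) (hPS : P*S = 0) (hPAP : P*(A*P) = 0)
    (h1 : ((1-P)*((S+A)*(1-P)))*Lp = 1-P)
    (h2 : Lp*((1-P)*((S+A)*(1-P))) = 1-P)
    (h3 : Lp = (1-P)*(Lp*(1-P)))
    (hn1 : (-(P*(A*(Lp*(A*P)))))*T = P)
    (hn2 : T*(-(P*(A*(Lp*(A*P))))) = P)
    (hn3 : T = P*(T*P)) :
    (S+A)*(T - T*(A*Lp) - Lp*(A*T) + (Lp + Lp*(A*(T*(A*Lp))))) = 1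
    ∧ (T - T*(A*Lp) - Lp*(A*T) + (Lp + Lp*(A*(T*(A*Lp)))))*(S+A) = 1
    ∧ P*(A*(Lp + Lp*(A*(T*(A*Lp))))) = 0
    ∧ P*(A*(Lp*(A*T))) = -P
    ∧ (1-P)*Lp = Lp ∧ Lp*(1-P) = Lp ∧ P*T = T ∧ T*P = T
    ∧ (1-P)*((S+A)*Lp) = 1-P := by
  have a1 : (1-P)*P = 0 := by rw [sub_mul, one_mul, hPP, sub_self]
  have a2 : P*(1-P) = 0 := by rw [mul_sub, mul_one, hPP, sub_self]
  have a3 : (1-P)*(1-P) = 1-P := by rw [mul_sub, mul_one, a1, sub_zero]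
  have a5 : P*Lp = 0 := by rw [h3, ← mul_assoc, a2, zero_mul]
  have a4 : Lp*P = 0 := by
    conv_lhs => rw [h3]
    calc ((1-P)*(Lp*(1-P)))*P = ((1-P)*Lp)*((1-P)*P) := by noncomm_ring
    _ = 0 := by rw [a1, mul_zero]
  have a7 : (1-P)*Lp = Lp := by
    conv_lhs => rw [h3, ← mul_assoc, a3]
    exact h3.symm
  have a6 : Lp*(1-P) = Lp := by rw [mul_sub, mul_one, a4, sub_zero]
  have a9 : P*T = T := by
    conv_lhs => rw [hn3, ← mul_assoc, hPP]
    exact hn3.symm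
  have a8 : T*P = T := by
    conv_lhs => rw [hn3, mul_assoc, mul_assoc, hPP]
    exact hn3.symm
  -- S kills T
  have bST : S*T = 0 := by
    rw [hn3]
    calc S*(P*(T*P)) = (S*P)*(T*P) := by noncomm_ring
    _ = 0 := by rw [hSP, zero_mul]
  have bTS : T*S = 0 := by
    rw [hn3]
    calc (P*(T*P))*S = (P*T)*(P*S) := by noncomm_ring
    _ = 0 := by rw [hPS, mul_zero]
  -- P A absorptions
  have f1 : P*(A*T) = 0 := by
    conv_lhs => rw [hn3]
    calc P*(A*(P*(T*P))) = (P*(A*P))*(T*P) := by noncomm_ring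
    _ = 0 := by rw [hPAP, zero_mul]
  have f2 : ∀ x : R, P*(A*(T*x)) = 0 := by
    intro x
    calc P*(A*(T*x)) = (P*(A*T))*x := by noncomm_ring
    _ = 0 := by rw [f1, zero_mul]
  have mf1 : T*(A*P) = 0 := by
    conv_lhs => rw [hn3]
    calc (P*(T*P))*(A*P) = (P*T)*(P*(A*P)) := by noncomm_ring
    _ = 0 := by rw [hPAP, mul_zero]
  -- N rules
  have hn1' : (P*(A*(Lp*(A*P))))*T = -P := by
    have : (P*(A*(Lp*(A*P))))*T = -((-(P*(A*(Lp*(A*P)))))*T) := by noncomm_ring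
    rw [this, hn1]
  have hn2' : T*(P*(A*(Lp*(A*P)))) = -P := by
    have : T*(P*(A*(Lp*(A*P)))) = -(T*(-(P*(A*(Lp*(A*P)))))) := by noncomm_ring
    rw [this, hn2]
  have f3 : P*(A*(Lp*(A*T))) = -P := by
    calc P*(A*(Lp*(A*T))) = P*(A*(Lp*(A*(P*T)))) := by rw [a9]
    _ = (P*(A*(Lp*(A*P))))*T := by noncomm_ring
    _ = -P := hn1'
  have f4 : ∀ x : R, P*(A*(Lp*(A*(T*x)))) = -(P*x) := by
    intro x
    calc P*(A*(Lp*(A*(T*x)))) = (P*(A*(Lp*(A*T))))*x := by noncomm_ring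
    _ = -(P*x) := by rw [f3]; noncomm_ring
  have mf3 : T*(A*(Lp*(A*P))) = -P := by
    calc T*(A*(Lp*(A*P))) = (T*P)*(A*(Lp*(A*P))) := by rw [a8]
    _ = T*(P*(A*(Lp*(A*P)))) := by noncomm_ring
    _ = -P := hn2'
  -- left expansion rules
  have a16 : (1-P)*((S+A)*Lp) = 1-P := by
    conv_lhs => rw [← a7]
    calc (1-P)*((S+A)*((1-P)*Lp)) = ((1-P)*((S+A)*(1-P)))*Lp := by noncomm_ring
    _ = 1-P := h1
  have pSLp : P*((S+A)*Lp) = P*(A*Lp) := by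
    calc P*((S+A)*Lp) = (P*S)*Lp + P*(A*Lp) := by noncomm_ring
    _ = P*(A*Lp) := by rw [hPS, zero_mul, zero_add]
  have e3 : (S+A)*Lp = P*(A*Lp) + (1-P) := by
    calc (S+A)*Lp = P*((S+A)*Lp) + (1-P)*((S+A)*Lp) := by noncomm_ring
    _ = P*(A*Lp) + (1-P) := by rw [pSLp, a16]
  have e4 : ∀ x : R, (S+A)*(Lp*x) = P*(A*(Lp*x)) + (x - P*x) := by
    intro x
    calc (S+A)*(Lp*x) = ((S+A)*Lp)*x := by noncomm_ring
    _ = (P*(A*Lp) + (1-P))*x := by rw [e3]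
    _ = P*(A*(Lp*x)) + (x - P*x) := by noncomm_ring
  have e1 : (S+A)*T = A*T := by rw [add_mul, bST, zero_add]
  have e2 : ∀ x : R, (S+A)*(T*x) = A*(T*x) := by
    intro x
    calc (S+A)*(T*x) = ((S+A)*T)*x := by noncomm_ring
    _ = A*(T*x) := by rw [e1, mul_assoc]
  -- right expansion rules
  have a18 : Lp*((S+A)*(1-P)) = 1-P := by
    conv_lhs => rw [← a6]
    calc (Lp*(1-P))*((S+A)*(1-P)) = Lp*((1-P)*((S+A)*(1-P))) := by noncomm_ring
    _ = 1-P := h2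
  have pLpS : Lp*((S+A)*P) = Lp*(A*P) := by
    calc Lp*((S+A)*P) = Lp*(S*P) + Lp*(A*P) := by noncomm_ring
    _ = Lp*(A*P) := by rw [hSP, mul_zero, zero_add]
  have me3 : Lp*(S+A) = Lp*(A*P) + (1-P) := by
    calc Lp*(S+A) = Lp*((S+A)*P) + Lp*((S+A)*(1-P)) := by noncomm_ring
    _ = Lp*(A*P) + (1-P) := by rw [pLpS, a18]
  have me4 : ∀ x : R, (x*Lp)*(S+A) = x*(Lp*(A*P)) + (x - x*P) := by
    intro x
    calc (x*Lp)*(S+A) = x*(Lp*(S+A)) := by noncomm_ring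
    _ = x*(Lp*(A*P) + (1-P)) := by rw [me3]
    _ = x*(Lp*(A*P)) + (x - x*P) := by noncomm_ring
  have me1 : T*(S+A) = T*A := by rw [mul_add, bTS, zero_add]
  have me2 : ∀ x : R, (x*T)*(S+A) = (x*T)*A := by
    intro x
    calc (x*T)*(S+A) = x*(T*(S+A)) := by noncomm_ring
    _ = (x*T)*A := by rw [me1, ← mul_assoc]
  refine ⟨?_, ?_, ?_, f3, a7, a6, a9, a8, a16⟩
  · -- (S+A) * L' = 1
    simp only [mul_sub, mul_add, e1, e2, e3, e4, f1, f2, f3, f4]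
    noncomm_ring
  · -- L' * (S+A) = 1
    have t2 : (T*(A*Lp))*(S+A) = -P + T*A := by
      calc (T*(A*Lp))*(S+A) = ((T*A)*Lp)*(S+A) := by noncomm_ring
      _ = (T*A)*(Lp*(A*P)) + ((T*A) - (T*A)*P) := me4 (T*A)
      _ = T*(A*(Lp*(A*P))) + (T*A - T*(A*P)) := by noncomm_ring
      _ = -P + (T*A - 0) := by rw [mf3, mf1]
      _ = -P + T*A := by rw [sub_zero]
    have t3 : (Lp*(A*T))*(S+A) = ((Lp*A)*T)*A := by
      calc (Lp*(A*T))*(S+A) = ((Lp*A)*T)*(S+A) := by noncomm_ring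
      _ = ((Lp*A)*T)*A := me2 (Lp*A)
    have t5 : (Lp*(A*(T*(A*Lp))))*(S+A) = -(Lp*(A*P)) + Lp*(A*(T*A)) := by
      calc (Lp*(A*(T*(A*Lp))))*(S+A) = ((Lp*(A*(T*A)))*Lp)*(S+A) := by noncomm_ring
      _ = (Lp*(A*(T*A)))*(Lp*(A*P)) + ((Lp*(A*(T*A))) - (Lp*(A*(T*A)))*P) := me4 _
      _ = Lp*(A*((T*(A*(Lp*(A*P)))))) + (Lp*(A*(T*A)) - Lp*(A*(T*(A*P)))) := by noncomm_ring
      _ = Lp*(A*(-P)) + (Lp*(A*(T*A)) - Lp*(A*0)) := by rw [mf3, mf1]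
      _ = -(Lp*(A*P)) + Lp*(A*(T*A)) := by noncomm_ring
    calc (T - T*(A*Lp) - Lp*(A*T) + (Lp + Lp*(A*(T*(A*Lp)))))*(S+A)
        = T*(S+A) - (T*(A*Lp))*(S+A) - (Lp*(A*T))*(S+A)
          + (Lp*(S+A) + (Lp*(A*(T*(A*Lp))))*(S+A)) := by noncomm_ring
    _ = T*A - (-P + T*A) - ((Lp*A)*T)*A
          + ((Lp*(A*P) + (1-P)) + (-(Lp*(A*P)) + Lp*(A*(T*A)))) := by
        rw [me1, t2, t3, me3, t5]
    _ = 1 := by noncomm_ring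
  · -- P ∘ A ∘ R = 0
    simp only [mul_add, f4]
    abel

theorem schur_adj (Tq : R)
    (hPP : P*P = P) (hTP : T*P = T) (hq3 : Tq = P*(Tq*P))
    (hstar : (-(P*(A*(Lp*(A*P)))))*Tq = P) :
    T*(A*(Lp*(A*Tq))) = -T := by
  have hq9 : P*Tq = Tq := by
    conv_lhs => rw [hq3, ← mul_assoc, hPP]
    exact hq3.symm
  have hstar' : (P*(A*(Lp*(A*P))))*Tq = -P := by
    have : (P*(A*(Lp*(A*P))))*Tq = -((-(P*(A*(Lp*(A*P)))))*Tq) := by noncomm_ring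
    rw [this, hstar]
  calc T*(A*(Lp*(A*Tq))) = T*(A*(Lp*(A*(P*Tq)))) := by rw [hq9]
  _ = (T*P)*(A*(Lp*(A*(P*Tq)))) := by rw [hTP]
  _ = T*((P*(A*(Lp*(A*P))))*Tq) := by noncomm_ring
  _ = T*(-P) := by rw [hstar']
  _ = -T := by rw [mul_neg, hTP]

end SchurRing

open ContinuousLinearMap


set_option maxHeartbeats 2000000 in
theorem hypocoercive_schur_resolvent_bound
    {H : Type*} [NormedAddCommGroup H] [InnerProductSpace ℝ H] [CompleteSpace H]
    (S A P₀ : H →L[ℝ] H)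
    -- P₀ is an orthogonal projection, Π₊ = 1 - P₀
    (hproj : P₀ ∘L P₀ = P₀) (hprojsa : ContinuousLinearMap.adjoint P₀ = P₀)
    -- S self-adjoint nonpositive with S P₀ = P₀ S = 0
    (hSsa : ContinuousLinearMap.adjoint S = S)
    (hSnonpos : ∀ x : H, (inner ℝ (S x) x : ℝ) ≤ 0)
    (hSP : S ∘L P₀ = 0) (hPS : P₀ ∘L S = 0)
    -- coercivity of -S on the range of Π₊ : -S ≥ s Π₊
    (s : ℝ) (hs : 0 < s)
    (hcoerc : ∀ x : H, s * ‖(1 - P₀) x‖ ^ 2 ≤ (inner ℝ (-(S x)) x : ℝ))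
    -- A antisymmetric with P₀ A P₀ = 0
    (hAanti : ContinuousLinearMap.adjoint A = -A)
    (hPAP : P₀ ∘L A ∘L P₀ = 0)
    -- macroscopic coercivity of A_{+0}
    (a : ℝ) (ha : 0 < a)
    (hmacro : ∀ x : H, a * ‖P₀ x‖ ≤ ‖(1 - P₀) (A (P₀ x))‖)
    -- invertibility of L_{++} = Π₊ L Π₊ on the range of Π₊
    (Lp : H →L[ℝ] H)
    (hLp₁ : ((1 - P₀) ∘L (S + A) ∘L (1 - P₀)) ∘L Lp = 1 - P₀)
    (hLp₂ : Lp ∘L ((1 - P₀) ∘L (S + A) ∘L (1 - P₀)) = 1 - P₀)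
    (hLp₃ : Lp = (1 - P₀) ∘L Lp ∘L (1 - P₀))
    -- invertibility of the Schur complement S₀ = A_{+0}* L_{++}⁻¹ A_{+0} on the range of P₀
    (S₀' : H →L[ℝ] H) (M : ℝ)
    (hS₀'₁ : (-(P₀ ∘L A ∘L (Lp ∘L (A ∘L P₀)))) ∘L S₀' = P₀)
    (hS₀'₂ : S₀' ∘L (-(P₀ ∘L A ∘L (Lp ∘L (A ∘L P₀)))) = P₀)
    (hS₀'₃ : S₀' = P₀ ∘L S₀' ∘L P₀)
    (hM : ‖S₀'‖ ≤ M) :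
    ∃ L' : H →L[ℝ] H, (S + A) ∘L L' = 1 ∧ L' ∘L (S + A) = 1 ∧
      ‖L'‖ ≤ 2 * M + 3 / s := by
  simp only [← ContinuousLinearMap.mul_def] at hproj hSP hPS hPAP hLp₁ hLp₂ hLp₃ hS₀'₁ hS₀'₂ hS₀'₃
  obtain ⟨g1, g2, g3, g4, cQLp, cLpQ, cPT, cTP, c16⟩ :=
    schur_core P₀ S A Lp S₀' hproj hSP hPS hPAP hLp₁ hLp₂ hLp₃ hS₀'₁ hS₀'₂ hS₀'₃
  refine ⟨S₀' - S₀'*(A*Lp) - Lp*(A*S₀') + (Lp + Lp*(A*(S₀'*(A*Lp)))), ?_, ?_, ?_⟩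
  · simp only [← ContinuousLinearMap.mul_def]; exact g1
  · simp only [← ContinuousLinearMap.mul_def]; exact g2
  · -- norm bound
    have hM0 : 0 ≤ M := le_trans (norm_nonneg S₀') hM
    have hs1 : 0 < 1/s := by positivity
    have appEq : ∀ {f g : H →L[ℝ] H}, f = g → ∀ x : H, f x = g x := by
      intro f g h x; rw [h]
    -- adjoint / inner ℝ helpers
    have hQsa : ContinuousLinearMap.adjoint (1 - P₀ : H →L[ℝ] H) = 1 - P₀ := by
      rw [map_sub, hprojsa]
      congr 1
      rw [ContinuousLinearMap.one_def, adjoint_id]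
    have hQsa_inner : ∀ u v : H, (inner ℝ ((1-P₀) u) v : ℝ) = inner ℝ u ((1-P₀) v) := by
      intro u v
      conv_lhs => rw [← hQsa]
      exact adjoint_inner_left _ v u
    have hPsa_inner : ∀ u v : H, (inner ℝ (P₀ u) v : ℝ) = inner ℝ u (P₀ v) := by
      intro u v
      conv_lhs => rw [← hprojsa]
      exact adjoint_inner_left _ v u
    have hA0 : ∀ x : H, (inner ℝ (A x) x : ℝ) = 0 := by
      intro x
      have h1 : (inner ℝ ((ContinuousLinearMap.adjoint A) x) x : ℝ) = inner ℝ x (A x) :=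
        adjoint_inner_left A x x
      rw [hAanti] at h1
      simp only [ContinuousLinearMap.neg_apply, inner_neg_left] at h1
      have h2 : (inner ℝ x (A x) : ℝ) = inner ℝ (A x) x := real_inner_comm _ _
      linarith
    have hAswap : ∀ u v : H, (inner ℝ (A u) v : ℝ) = -inner ℝ u (A v) := by
      intro u v
      rw [← adjoint_inner_right, hAanti]
      simp only [ContinuousLinearMap.neg_apply, inner_neg_right]
    have hQnorm : ∀ x : H, ‖(1-P₀) x‖ ≤ ‖x‖ := by
      intro x
      have hQQ : ((1:H →L[ℝ] H)-P₀)*(1-P₀) = (1-P₀ : H →L[ℝ] H) := by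
        calc ((1:H →L[ℝ] H)-P₀)*(1-P₀) = 1 - P₀ - P₀ + P₀*P₀ := by noncomm_ring
        _ = 1 - P₀ := by rw [hproj]; abel
      have e1 : ‖(1-P₀) x‖^2 = (inner ℝ ((1-P₀) x) ((1-P₀) x) : ℝ) :=
        (real_inner_self_eq_norm_sq _).symm
      have e2 : (inner ℝ ((1-P₀) x) ((1-P₀) x) : ℝ) = inner ℝ x ((1-P₀) x) := by
        calc (inner ℝ ((1-P₀) x) ((1-P₀) x) : ℝ)
            = inner ℝ x (((1-P₀)*(1-P₀)) x) := by rw [hQsa_inner]; rfl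
        _ = inner ℝ x ((1-P₀) x) := by rw [hQQ]
      have e3 : (inner ℝ x ((1-P₀) x) : ℝ) ≤ ‖x‖*‖(1-P₀) x‖ := real_inner_le_norm _ _
      nlinarith [norm_nonneg ((1-P₀) x), norm_nonneg x]
    -- master inequalities
    have masterInner : ∀ y : H, s*‖Lp y‖^2 ≤ -(inner ℝ ((1-P₀) y) (Lp y) : ℝ) := by
      intro y
      have hq : (1-P₀) (Lp y) = Lp y := appEq cQLp y
      have h0 := hcoerc (Lp y)
      rw [hq] at h0
      have hGL : (1-P₀) ((S+A) (Lp y)) = (1-P₀) y := appEq c16 y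
      have hL : (inner ℝ ((S+A) (Lp y)) (Lp y) : ℝ) = inner ℝ ((1-P₀) y) (Lp y) := by
        calc (inner ℝ ((S+A) (Lp y)) (Lp y) : ℝ)
            = inner ℝ ((S+A) (Lp y)) ((1-P₀) (Lp y)) := by rw [hq]
        _ = inner ℝ ((1-P₀) ((S+A) (Lp y))) (Lp y) := (hQsa_inner _ _).symm
        _ = inner ℝ ((1-P₀) y) (Lp y) := by rw [hGL]
      have hSval : (inner ℝ (-(S (Lp y))) (Lp y) : ℝ) = -(inner ℝ ((1-P₀) y) (Lp y) : ℝ) := by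
        rw [inner_neg_left]
        have hadd : (inner ℝ ((S+A) (Lp y)) (Lp y) : ℝ)
            = inner ℝ (S (Lp y)) (Lp y) + inner ℝ (A (Lp y)) (Lp y) := by
          simp [ContinuousLinearMap.add_apply, inner_add_left]
        rw [hadd, hA0, add_zero] at hL
        rw [hL]
      rw [hSval] at h0
      exact h0
    -- scalar helpers
    have div_helper : ∀ t c : ℝ, 0 ≤ t → 0 ≤ c → s*t^2 ≤ c*t → t ≤ (1/s)*c := by
      intro t c ht hc h
      rcases ht.eq_or_lt with h0 | h0
      · rw [← h0]; positivity
      · have h2 : (s*t)*t ≤ c*t := by nlinarith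
        have h3 := le_of_mul_le_mul_right h2 h0
        calc t = (1/s)*(s*t) := by field_simp
        _ ≤ (1/s)*c := mul_le_mul_of_nonneg_left h3 (le_of_lt hs1)
    have amgm : ∀ t c : ℝ, 0 ≤ t → 0 ≤ c → s*t^2 ≤ M*c^2 → t ≤ ((M+1/s)/2)*c := by
      intro t c ht hc h
      have h1 : t^2 ≤ ((1/s)*M)*c^2 := by
        have h5 := mul_le_mul_of_nonneg_left h (le_of_lt hs1)
        calc t^2 = (1/s)*(s*t^2) := by
              rw [← mul_assoc, one_div_mul_cancel (ne_of_gt hs), one_mul]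
        _ ≤ (1/s)*(M*c^2) := h5
        _ = ((1/s)*M)*c^2 := by ring
      have h2 : (1/s)*M ≤ ((M+1/s)/2)^2 := by nlinarith [sq_nonneg (M - 1/s)]
      have h3 : t^2 ≤ (((M+1/s)/2)*c)^2 := by
        calc t^2 ≤ ((1/s)*M)*c^2 := h1
        _ ≤ ((M+1/s)/2)^2*c^2 := mul_le_mul_of_nonneg_right h2 (sq_nonneg c)
        _ = (((M+1/s)/2)*c)^2 := by ring
      calc t = Real.sqrt (t^2) := (Real.sqrt_sq ht).symm
      _ ≤ Real.sqrt ((((M+1/s)/2)*c)^2) := Real.sqrt_le_sqrt h3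
      _ = ((M+1/s)/2)*c := Real.sqrt_sq (by nlinarith)
    -- bound for R = Lp + Lp A S₀' A Lp
    have hRb : ∀ φ : H, ‖(Lp + Lp*(A*(S₀'*(A*Lp)))) φ‖ ≤ (1/s)*‖φ‖ := by
      intro φ
      have hz : (Lp + Lp*(A*(S₀'*(A*Lp)))) φ = Lp (φ + A (S₀' (A (Lp φ)))) := by
        rw [map_add]; rfl
      have h0 := masterInner (φ + A (S₀' (A (Lp φ))))
      rw [← hz] at h0
      have hsplit : (inner ℝ ((1-P₀) (φ + A (S₀' (A (Lp φ))))) ((Lp + Lp*(A*(S₀'*(A*Lp)))) φ) : ℝ)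
          = inner ℝ ((1-P₀) φ) ((Lp + Lp*(A*(S₀'*(A*Lp)))) φ)
            + inner ℝ ((1-P₀) (A (S₀' (A (Lp φ))))) ((Lp + Lp*(A*(S₀'*(A*Lp)))) φ) := by
        rw [map_add, inner_add_left]
      have hzero : (inner ℝ ((1-P₀) (A (S₀' (A (Lp φ))))) ((Lp + Lp*(A*(S₀'*(A*Lp)))) φ) : ℝ) = 0 := by
        have hQR : (1-P₀) ((Lp + Lp*(A*(S₀'*(A*Lp)))) φ) = (Lp + Lp*(A*(S₀'*(A*Lp)))) φ := by
          rw [hz]; exact appEq cQLp _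
        have hPz : P₀ (S₀' (A (Lp φ))) = S₀' (A (Lp φ)) := appEq cPT _
        have hPAR : P₀ (A ((Lp + Lp*(A*(S₀'*(A*Lp)))) φ)) = 0 := by
          have h := appEq g3 φ
          simpa using h
        calc (inner ℝ ((1-P₀) (A (S₀' (A (Lp φ))))) ((Lp + Lp*(A*(S₀'*(A*Lp)))) φ) : ℝ)
            = inner ℝ (A (S₀' (A (Lp φ)))) ((1-P₀) ((Lp + Lp*(A*(S₀'*(A*Lp)))) φ)) := hQsa_inner _ _
        _ = inner ℝ (A (S₀' (A (Lp φ)))) ((Lp + Lp*(A*(S₀'*(A*Lp)))) φ) := by rw [hQR]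
        _ = -inner ℝ (S₀' (A (Lp φ))) (A ((Lp + Lp*(A*(S₀'*(A*Lp)))) φ)) := hAswap _ _
        _ = -inner ℝ (P₀ (S₀' (A (Lp φ)))) (A ((Lp + Lp*(A*(S₀'*(A*Lp)))) φ)) := by rw [hPz]
        _ = -inner ℝ (S₀' (A (Lp φ))) (P₀ (A ((Lp + Lp*(A*(S₀'*(A*Lp)))) φ))) := by rw [hPsa_inner]
        _ = 0 := by rw [hPAR, inner_zero_right, neg_zero]
      rw [hsplit, hzero, add_zero] at h0
      have hcs : -(inner ℝ ((1-P₀) φ) ((Lp + Lp*(A*(S₀'*(A*Lp)))) φ) : ℝ)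
          ≤ ‖φ‖*‖(Lp + Lp*(A*(S₀'*(A*Lp)))) φ‖ := by
        calc -(inner ℝ ((1-P₀) φ) ((Lp + Lp*(A*(S₀'*(A*Lp)))) φ) : ℝ)
            ≤ |(inner ℝ ((1-P₀) φ) ((Lp + Lp*(A*(S₀'*(A*Lp)))) φ) : ℝ)| := neg_le_abs _
        _ ≤ ‖(1-P₀) φ‖*‖(Lp + Lp*(A*(S₀'*(A*Lp)))) φ‖ := abs_real_inner_le_norm _ _
        _ ≤ ‖φ‖*‖(Lp + Lp*(A*(S₀'*(A*Lp)))) φ‖ :=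
            mul_le_mul_of_nonneg_right (hQnorm φ) (norm_nonneg _)
      exact div_helper _ _ (norm_nonneg _) (norm_nonneg _) (le_trans h0 hcs)
    -- bound for B = Lp A S₀'
    have hBb : ∀ φ : H, ‖(Lp*(A*S₀')) φ‖ ≤ ((M+1/s)/2)*‖φ‖ := by
      intro φ
      have h0 := masterInner (A (S₀' φ))
      have key : -(inner ℝ ((1-P₀) (A (S₀' φ))) (Lp (A (S₀' φ))) : ℝ) = -(inner ℝ (S₀' φ) φ : ℝ) := by
        have hQB : (1-P₀) (Lp (A (S₀' φ))) = Lp (A (S₀' φ)) := appEq cQLp _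
        have hPz : P₀ (S₀' φ) = S₀' φ := appEq cPT φ
        have hPAB : P₀ (A (Lp (A (S₀' φ)))) = -(P₀ φ) := by
          have h := appEq g4 φ
          simpa using h
        calc -(inner ℝ ((1-P₀) (A (S₀' φ))) (Lp (A (S₀' φ))) : ℝ)
            = -(inner ℝ (A (S₀' φ)) ((1-P₀) (Lp (A (S₀' φ)))) : ℝ) := by rw [hQsa_inner]
        _ = -(inner ℝ (A (S₀' φ)) (Lp (A (S₀' φ))) : ℝ) := by rw [hQB]
        _ = inner ℝ (S₀' φ) (A (Lp (A (S₀' φ)))) := by rw [hAswap]; ring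
        _ = inner ℝ (P₀ (S₀' φ)) (A (Lp (A (S₀' φ)))) := by rw [hPz]
        _ = inner ℝ (S₀' φ) (P₀ (A (Lp (A (S₀' φ))))) := hPsa_inner _ _
        _ = inner ℝ (S₀' φ) (-(P₀ φ)) := by rw [hPAB]
        _ = -(inner ℝ (S₀' φ) (P₀ φ) : ℝ) := inner_neg_right _ _
        _ = -(inner ℝ (P₀ (S₀' φ)) φ : ℝ) := by rw [hPsa_inner]
        _ = -(inner ℝ (S₀' φ) φ : ℝ) := by rw [hPz]
      rw [key] at h0
      have hub : -(inner ℝ (S₀' φ) φ : ℝ) ≤ M*‖φ‖^2 := by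
        calc -(inner ℝ (S₀' φ) φ : ℝ) ≤ |(inner ℝ (S₀' φ) φ : ℝ)| := neg_le_abs _
        _ ≤ ‖S₀' φ‖*‖φ‖ := abs_real_inner_le_norm _ _
        _ ≤ (M*‖φ‖)*‖φ‖ := by
            refine mul_le_mul_of_nonneg_right ?_ (norm_nonneg φ)
            calc ‖S₀' φ‖ ≤ ‖S₀'‖*‖φ‖ := le_opNorm _ _
            _ ≤ M*‖φ‖ := mul_le_mul_of_nonneg_right hM (norm_nonneg φ)
        _ = M*‖φ‖^2 := by ring
      exact amgm _ _ (norm_nonneg _) (norm_nonneg _) (le_trans h0 hub)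
    -- adjoint side
    have cQLq : ((1:H →L[ℝ] H)-P₀)*(ContinuousLinearMap.adjoint Lp) = ContinuousLinearMap.adjoint Lp := by
      have h := congrArg ContinuousLinearMap.adjoint cLpQ
      rw [ContinuousLinearMap.mul_def, adjoint_comp, hQsa, ← ContinuousLinearMap.mul_def] at h
      exact h
    have masterAdj : ∀ y : H, s*‖(ContinuousLinearMap.adjoint Lp) y‖^2
        ≤ -(inner ℝ ((ContinuousLinearMap.adjoint Lp) y) ((1-P₀) y) : ℝ) := by
      intro y
      have hqx : (1-P₀) ((ContinuousLinearMap.adjoint Lp) y) = (ContinuousLinearMap.adjoint Lp) y :=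
        appEq cQLq y
      have h0 := hcoerc ((ContinuousLinearMap.adjoint Lp) y)
      rw [hqx] at h0
      have hGadj : (ContinuousLinearMap.adjoint (((1:H →L[ℝ] H)-P₀)*((S+A)*(1-P₀))))
          ((ContinuousLinearMap.adjoint Lp) y) = (1-P₀) y := by
        have h := congrArg ContinuousLinearMap.adjoint hLp₂
        rw [ContinuousLinearMap.mul_def, adjoint_comp, hQsa] at h
        have h2 := appEq h y
        exact h2
      have hL : (inner ℝ ((S+A) ((ContinuousLinearMap.adjoint Lp) y)) ((ContinuousLinearMap.adjoint Lp) y) : ℝ)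
          = inner ℝ ((ContinuousLinearMap.adjoint Lp) y) ((1-P₀) y) := by
        calc (inner ℝ ((S+A) ((ContinuousLinearMap.adjoint Lp) y)) ((ContinuousLinearMap.adjoint Lp) y) : ℝ)
            = inner ℝ ((S+A) ((ContinuousLinearMap.adjoint Lp) y)) ((1-P₀) ((ContinuousLinearMap.adjoint Lp) y)) := by rw [hqx]
        _ = inner ℝ ((1-P₀) ((S+A) ((ContinuousLinearMap.adjoint Lp) y))) ((ContinuousLinearMap.adjoint Lp) y) :=
            (hQsa_inner _ _).symm
        _ = inner ℝ ((1-P₀) ((S+A) ((1-P₀) ((ContinuousLinearMap.adjoint Lp) y)))) ((ContinuousLinearMap.adjoint Lp) y) := by rw [hqx]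
        _ = inner ℝ ((((1:H →L[ℝ] H)-P₀)*((S+A)*(1-P₀))) ((ContinuousLinearMap.adjoint Lp) y)) ((ContinuousLinearMap.adjoint Lp) y) := rfl
        _ = inner ℝ ((ContinuousLinearMap.adjoint Lp) y)
              ((ContinuousLinearMap.adjoint (((1:H →L[ℝ] H)-P₀)*((S+A)*(1-P₀)))) ((ContinuousLinearMap.adjoint Lp) y)) :=
            (adjoint_inner_right _ _ _).symm
        _ = inner ℝ ((ContinuousLinearMap.adjoint Lp) y) ((1-P₀) y) := by rw [hGadj]
      have hSval : (inner ℝ (-(S ((ContinuousLinearMap.adjoint Lp) y))) ((ContinuousLinearMap.adjoint Lp) y) : ℝ)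
          = -(inner ℝ ((ContinuousLinearMap.adjoint Lp) y) ((1-P₀) y) : ℝ) := by
        rw [inner_neg_left]
        have hadd : (inner ℝ ((S+A) ((ContinuousLinearMap.adjoint Lp) y)) ((ContinuousLinearMap.adjoint Lp) y) : ℝ)
            = inner ℝ (S ((ContinuousLinearMap.adjoint Lp) y)) ((ContinuousLinearMap.adjoint Lp) y)
              + inner ℝ (A ((ContinuousLinearMap.adjoint Lp) y)) ((ContinuousLinearMap.adjoint Lp) y) := by
          simp [ContinuousLinearMap.add_apply, inner_add_left]
        rw [hadd, hA0, add_zero] at hL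
        rw [hL]
      rw [hSval] at h0
      exact h0
    have hq3 : ContinuousLinearMap.adjoint S₀'
        = P₀*((ContinuousLinearMap.adjoint S₀')*P₀) := by
      have h := congrArg ContinuousLinearMap.adjoint hS₀'₃
      simp only [ContinuousLinearMap.mul_def, adjoint_comp, hprojsa] at h
      simp only [← ContinuousLinearMap.mul_def] at h
      conv_lhs => rw [h]
      noncomm_ring
    have hstar : (-(P₀*(A*((ContinuousLinearMap.adjoint Lp)*(A*P₀)))))*(ContinuousLinearMap.adjoint S₀') = P₀ := by
      have h := congrArg ContinuousLinearMap.adjoint hS₀'₂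
      simp only [ContinuousLinearMap.mul_def, map_neg, adjoint_comp, hprojsa, hAanti] at h
      simp only [← ContinuousLinearMap.mul_def] at h
      conv_rhs => rw [← h]
      noncomm_ring
    have gid : S₀'*(A*((ContinuousLinearMap.adjoint Lp)*(A*(ContinuousLinearMap.adjoint S₀')))) = -S₀' :=
      schur_adj P₀ A (ContinuousLinearMap.adjoint Lp) S₀' (ContinuousLinearMap.adjoint S₀')
        hproj cTP hq3 hstar
    have hDb : ∀ φ : H, ‖((ContinuousLinearMap.adjoint Lp)*(A*(ContinuousLinearMap.adjoint S₀'))) φ‖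
        ≤ ((M+1/s)/2)*‖φ‖ := by
      intro φ
      have h0 := masterAdj (A ((ContinuousLinearMap.adjoint S₀') φ))
      have key : -(inner ℝ ((ContinuousLinearMap.adjoint Lp) (A ((ContinuousLinearMap.adjoint S₀') φ)))
            ((1-P₀) (A ((ContinuousLinearMap.adjoint S₀') φ))) : ℝ) = -(inner ℝ (S₀' φ) φ : ℝ) := by
        have hQD : (1-P₀) ((ContinuousLinearMap.adjoint Lp) (A ((ContinuousLinearMap.adjoint S₀') φ)))
            = (ContinuousLinearMap.adjoint Lp) (A ((ContinuousLinearMap.adjoint S₀') φ)) := appEq cQLq _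
        have hSAD : S₀' (A ((ContinuousLinearMap.adjoint Lp) (A ((ContinuousLinearMap.adjoint S₀') φ))))
            = -(S₀' φ) := by
          have h := appEq gid φ
          simpa using h
        calc -(inner ℝ ((ContinuousLinearMap.adjoint Lp) (A ((ContinuousLinearMap.adjoint S₀') φ)))
              ((1-P₀) (A ((ContinuousLinearMap.adjoint S₀') φ))) : ℝ)
            = -(inner ℝ ((1-P₀) ((ContinuousLinearMap.adjoint Lp) (A ((ContinuousLinearMap.adjoint S₀') φ))))
              (A ((ContinuousLinearMap.adjoint S₀') φ)) : ℝ) := by rw [hQsa_inner]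
        _ = -(inner ℝ ((ContinuousLinearMap.adjoint Lp) (A ((ContinuousLinearMap.adjoint S₀') φ)))
              (A ((ContinuousLinearMap.adjoint S₀') φ)) : ℝ) := by rw [hQD]
        _ = inner ℝ (A ((ContinuousLinearMap.adjoint Lp) (A ((ContinuousLinearMap.adjoint S₀') φ))))
              ((ContinuousLinearMap.adjoint S₀') φ) := by rw [hAswap]
        _ = inner ℝ (S₀' (A ((ContinuousLinearMap.adjoint Lp) (A ((ContinuousLinearMap.adjoint S₀') φ))))) φ :=
            adjoint_inner_right _ _ _
        _ = (inner ℝ (-(S₀' φ)) φ : ℝ) := by rw [hSAD]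
        _ = -(inner ℝ (S₀' φ) φ : ℝ) := inner_neg_left _ _
      rw [key] at h0
      have hub : -(inner ℝ (S₀' φ) φ : ℝ) ≤ M*‖φ‖^2 := by
        calc -(inner ℝ (S₀' φ) φ : ℝ) ≤ |(inner ℝ (S₀' φ) φ : ℝ)| := neg_le_abs _
        _ ≤ ‖S₀' φ‖*‖φ‖ := abs_real_inner_le_norm _ _
        _ ≤ (M*‖φ‖)*‖φ‖ := by
            refine mul_le_mul_of_nonneg_right ?_ (norm_nonneg φ)
            calc ‖S₀' φ‖ ≤ ‖S₀'‖*‖φ‖ := le_opNorm _ _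
            _ ≤ M*‖φ‖ := mul_le_mul_of_nonneg_right hM (norm_nonneg φ)
        _ = M*‖φ‖^2 := by ring
      exact amgm _ _ (norm_nonneg _) (norm_nonneg _) (le_trans h0 hub)
    have hCn : ‖S₀'*(A*Lp)‖ ≤ (M+1/s)/2 := by
      have hadjC : ContinuousLinearMap.adjoint (S₀'*(A*Lp))
          = -((ContinuousLinearMap.adjoint Lp)*(A*(ContinuousLinearMap.adjoint S₀'))) := by
        simp only [ContinuousLinearMap.mul_def, adjoint_comp, hAanti]
        simp only [← ContinuousLinearMap.mul_def]
        noncomm_ring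
      calc ‖S₀'*(A*Lp)‖ = ‖ContinuousLinearMap.adjoint (S₀'*(A*Lp))‖ :=
          (ContinuousLinearMap.adjoint.norm_map _).symm
      _ = ‖(ContinuousLinearMap.adjoint Lp)*(A*(ContinuousLinearMap.adjoint S₀'))‖ := by
          rw [hadjC, norm_neg]
      _ ≤ (M+1/s)/2 := opNorm_le_bound _ (by linarith) hDb
    have hBn : ‖Lp*(A*S₀')‖ ≤ (M+1/s)/2 := opNorm_le_bound _ (by linarith) hBb
    have hRn : ‖Lp + Lp*(A*(S₀'*(A*Lp)))‖ ≤ 1/s := opNorm_le_bound _ (le_of_lt hs1) hRb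
    have h3s : (3:ℝ)/s = 3*(1/s) := by ring
    calc ‖S₀' - S₀'*(A*Lp) - Lp*(A*S₀') + (Lp + Lp*(A*(S₀'*(A*Lp))))‖
        ≤ ‖S₀' - S₀'*(A*Lp) - Lp*(A*S₀')‖ + ‖Lp + Lp*(A*(S₀'*(A*Lp)))‖ := norm_add_le _ _
    _ ≤ (‖S₀' - S₀'*(A*Lp)‖ + ‖Lp*(A*S₀')‖) + ‖Lp + Lp*(A*(S₀'*(A*Lp)))‖ := by
        have := norm_sub_le (S₀' - S₀'*(A*Lp)) (Lp*(A*S₀'))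
        linarith
    _ ≤ ((‖S₀'‖ + ‖S₀'*(A*Lp)‖) + ‖Lp*(A*S₀')‖) + ‖Lp + Lp*(A*(S₀'*(A*Lp)))‖ := by
        have := norm_sub_le S₀' (S₀'*(A*Lp))
        linarith
    _ ≤ ((M + (M+1/s)/2) + (M+1/s)/2) + 1/s := by
        have h1 := hM
        linarith
    _ ≤ 2*M + 3/s := by rw [h3s]; linarith
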